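/- For every ε > 0 there exists α > 0 such that for all sufficiently large m: every graph on m vertices with more than RT(m, K_s, ρ-mean) + εm²/4 edges, equipped with a (ρ+α)-mean edge coloring, contains a monochromatic K_s. -/

import Mathlib

open Finset
open scoped Classical

/-- The number of distinct colors on edges incident to `v`, for the edge coloring `c`. -/
noncomputable def colorsAt {V : Type*} [Fintype V] (G : SimpleGraph V)
    (c : Sym2 V → ℕ) (v : V) : ℕ :=
  ((G.incidenceFinset v).image c).card

/-- The colored graph `(G, c)` contains a monochromatic clique on `k` vertices. -/
def hasMonoClique {V : Type*} (G : SimpleGraph V) (c : Sym2 V → ℕ) (k : ℕ) : Prop :=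
  ∃ T : Finset V, T.card = k ∧ (∀ u ∈ T, ∀ v ∈ T, u ≠ v → G.Adj u v) ∧
    ∃ i : ℕ, ∀ u ∈ T, ∀ v ∈ T, u ≠ v → c s(u, v) = i

/-- The mean Ramsey–Turán number `RT(n, K_s, ρ-mean)`: the maximum number of edges of a
graph on `n` vertices admitting a `ρ`-mean edge coloring with no monochromatic `K_s`. -/
noncomputable def RTmean (n s : ℕ) (ρ : ℝ) : ℕ :=
  sSup {e : ℕ | ∃ (G : SimpleGraph (Fin n)) (c : Sym2 (Fin n) → ℕ),
    (∑ v, (colorsAt G c v : ℝ)) ≤ ρ * n ∧ ¬ hasMonoClique G c s ∧ G.edgeFinset.card = e}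

/-- Delete all edges incident to `S`. -/
def delAt {V : Type*} (G : SimpleGraph V) (S : Finset V) : SimpleGraph V where
  Adj u v := G.Adj u v ∧ u ∉ S ∧ v ∉ S
  symm := ⟨fun u v (h : G.Adj u v ∧ u ∉ S ∧ v ∉ S) => ⟨h.1.symm, h.2.2, h.2.1⟩⟩
  loopless := ⟨fun v (h : G.Adj v v ∧ v ∉ S ∧ v ∉ S) => G.irrefl h.1⟩

lemma delAt_incidence_subset {V : Type*} [Fintype V] [DecidableEq V]
    (G : SimpleGraph V) [DecidableRel G.Adj] (S : Finset V) (v : V) :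
    (delAt G S).incidenceFinset v ⊆ G.incidenceFinset v := by
  intro e he
  rw [SimpleGraph.mem_incidenceFinset] at he ⊢
  obtain ⟨he1, he2⟩ := he
  refine ⟨?_, he2⟩
  induction e with
  | h a b => exact (SimpleGraph.mem_edgeSet _).2 ((SimpleGraph.mem_edgeSet _).1 he1).1

lemma colorsAt_delAt_le {V : Type*} [Fintype V] (G : SimpleGraph V)
    (c : Sym2 V → ℕ) (S : Finset V) (v : V) :
    colorsAt (delAt G S) c v ≤ colorsAt G c v :=
  Finset.card_le_card (Finset.image_subset_image (delAt_incidence_subset G S v))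

lemma colorsAt_delAt_eq_zero {V : Type*} [Fintype V] (G : SimpleGraph V)
    (c : Sym2 V → ℕ) (S : Finset V) {v : V} (hv : v ∈ S) :
    colorsAt (delAt G S) c v = 0 := by
  have h : (delAt G S).incidenceFinset v = ∅ := by
    rw [Finset.eq_empty_iff_forall_notMem]
    intro e he
    rw [SimpleGraph.mem_incidenceFinset] at he
    obtain ⟨he1, he2⟩ := he
    induction e with
    | h a b =>
      obtain ⟨_, ha, hb⟩ := (SimpleGraph.mem_edgeSet _).1 he1
      rcases (Sym2.mem_iff).1 he2 with rfl | rfl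
      · exact ha hv
      · exact hb hv
  simp [colorsAt, h]

lemma colorsAt_pos_of_adj {V : Type*} [Fintype V] (G : SimpleGraph V)
    (c : Sym2 V → ℕ) {a b : V} (h : G.Adj a b) : 0 < colorsAt G c a := by
  rw [colorsAt, Finset.card_pos]
  refine ⟨c s(a, b), Finset.mem_image_of_mem c ?_⟩
  rw [SimpleGraph.mem_incidenceFinset]
  exact ⟨(SimpleGraph.mem_edgeSet _).2 h, Sym2.mem_mk_left a b⟩

lemma hasMonoClique_of_delAt {V : Type*} (G : SimpleGraph V) (S : Finset V)
    (c : Sym2 V → ℕ) (k : ℕ) (h : hasMonoClique (delAt G S) c k) : hasMonoClique G c k := by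
  obtain ⟨T, hT, hadj, i, hi⟩ := h
  exact ⟨T, hT, fun u hu v hv huv => (hadj u hu v hv huv).1, i, hi⟩

lemma edge_card_delAt {V : Type*} [Fintype V] [DecidableEq V]
    (G : SimpleGraph V) [DecidableRel G.Adj] (S : Finset V) :
    G.edgeFinset.card ≤ (delAt G S).edgeFinset.card + ∑ v ∈ S, G.degree v := by
  classical
  have hsub : G.edgeFinset ⊆ (delAt G S).edgeFinset ∪ S.biUnion (fun v => G.incidenceFinset v) := by
    intro e he
    rw [SimpleGraph.mem_edgeFinset] at he
    induction e with
    | h a b =>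
      have hab : G.Adj a b := (SimpleGraph.mem_edgeSet _).1 he
      by_cases ha : a ∈ S
      · refine Finset.mem_union_right _ (Finset.mem_biUnion.2 ⟨a, ha, ?_⟩)
        rw [SimpleGraph.mem_incidenceFinset]
        exact ⟨he, Sym2.mem_mk_left a b⟩
      by_cases hb : b ∈ S
      by_cases hbu : True
      · refine Finset.mem_union_right _ (Finset.mem_biUnion.2 ⟨b, hb, ?_⟩)
        rw [SimpleGraph.mem_incidenceFinset]
        exact ⟨he, Sym2.mem_mk_right a b⟩
      · exact absurd trivial hbu
      · exact Finset.mem_union_left _ (by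
          rw [SimpleGraph.mem_edgeFinset]
          exact (SimpleGraph.mem_edgeSet _).2 ⟨hab, ha, hb⟩)
  calc G.edgeFinset.card ≤ _ := Finset.card_le_card hsub
    _ ≤ (delAt G S).edgeFinset.card + (S.biUnion (fun v => G.incidenceFinset v)).card :=
        Finset.card_union_le _ _
    _ ≤ (delAt G S).edgeFinset.card + ∑ v ∈ S, (G.incidenceFinset v).card :=
        Nat.add_le_add_left (Finset.card_biUnion_le) _
    _ = (delAt G S).edgeFinset.card + ∑ v ∈ S, G.degree v := by
        simp [SimpleGraph.card_incidenceFinset_eq_degree]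

lemma sum_colorsAt_delAt_le {V : Type*} [Fintype V] (G : SimpleGraph V)
    (c : Sym2 V → ℕ) (S : Finset V) :
    ∑ v, (colorsAt (delAt G S) c v : ℝ) ≤ ∑ v ∈ Sᶜ, (colorsAt G c v : ℝ) := by
  rw [← Finset.sum_add_sum_compl S]
  have h1 : ∑ v ∈ S, (colorsAt (delAt G S) c v : ℝ) = 0 := by
    apply Finset.sum_eq_zero
    intro v hv
    rw [colorsAt_delAt_eq_zero G c S hv]; norm_num
  rw [h1, zero_add]
  exact Finset.sum_le_sum fun v _ => by exact_mod_cast colorsAt_delAt_le G c S v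

/-- For every `ε > 0` there is `α > 0` such that for all sufficiently large `m`,
every graph on `m` vertices with more than `RT(m, K_s, ρ-mean)` + εm²/4` edges, equipped with a
`(ρ+α)`-mean edge coloring, contains a monochromatic `K_s`. -/
theorem adjust_lemma (s : ℕ) (hs : 2 ≤ s) (ρ : ℝ) (hρ : 1 ≤ ρ) (ε : ℝ) (hε : 0 < ε) :
    ∃ α : ℝ, 0 < α ∧ ∃ M : ℕ, ∀ m : ℕ, M ≤ m →
      ∀ (G : SimpleGraph (Fin m)) (c : Sym2 (Fin m) → ℕ),
        (RTmean m s ρ : ℝ) + ε * m ^ 2 / 4 < (G.edgeFinset.card : ℝ) →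
        (∑ v, (colorsAt G c v : ℝ)) ≤ (ρ + α) * m →
        hasMonoClique G c s := by
  refine ⟨ε / 8, by positivity, ⌈8 / ε⌉₊ + 1, fun m hm G c hedge hsum => ?_⟩
  by_contra hmono
  set α : ℝ := ε / 8 with hα
  have hm1 : 1 ≤ m := le_trans (Nat.le_add_left 1 _) hm
  have hm0 : (0 : ℝ) < m := by exact_mod_cast hm1
  have hεm : 8 < ε * m := by
    have h1 : (⌈8 / ε⌉₊ : ℝ) < m := by exact_mod_cast Nat.lt_of_lt_of_le (Nat.lt_succ_self _) hm
    have h2 : (8 : ℝ) / ε < m := lt_of_le_of_lt (Nat.le_ceil _) h1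
    rw [div_lt_iff₀ hε] at h2
    linarith
  set k : ℕ := ⌈α * m⌉₊ with hk
  set P : Finset (Fin m) := Finset.univ.filter (fun v => 0 < colorsAt G c v) with hP
  obtain ⟨S, hSk, hsum'⟩ : ∃ S : Finset (Fin m), S.card ≤ k ∧
      (∑ v, (colorsAt (delAt G S) c v : ℝ)) ≤ ρ * m := by
    by_cases hPk : k ≤ P.card
    · obtain ⟨S, hSP, hScard⟩ := Finset.exists_subset_card_eq hPk
      refine ⟨S, hScard.le, ?_⟩
      have h1 : ∑ v ∈ Sᶜ, (colorsAt G c v : ℝ)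
          = ∑ v, (colorsAt G c v : ℝ) - ∑ v ∈ S, (colorsAt G c v : ℝ) := by
        rw [eq_sub_iff_add_eq, Finset.sum_compl_add_sum]
      have h2 : (k : ℝ) ≤ ∑ v ∈ S, (colorsAt G c v : ℝ) := by
        have := Finset.card_nsmul_le_sum S (fun v => (colorsAt G c v : ℝ)) 1
          (fun v hv => Nat.one_le_cast.2 (Finset.mem_filter.1 (hSP hv)).2)
        simpa [hScard] using this
      have h3 : α * m ≤ (k : ℝ) := Nat.le_ceil _
      calc ∑ v, (colorsAt (delAt G S) c v : ℝ)
          ≤ ∑ v ∈ Sᶜ, (colorsAt G c v : ℝ) := by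
            convert sum_colorsAt_delAt_le G c S using 2
            congr!
        _ ≤ (ρ + α) * m - k := by rw [h1]; linarith
        _ ≤ ρ * m := by nlinarith
    · refine ⟨P, (Nat.lt_of_not_le hPk).le, ?_⟩
      have hz : ∀ v, colorsAt (delAt G P) c v = 0 := by
        intro v
        by_cases hv : v ∈ P
        · exact colorsAt_delAt_eq_zero G c P hv
        · have h0 : colorsAt G c v = 0 := by
            by_contra h
            exact hv (Finset.mem_filter.2 ⟨Finset.mem_univ v, Nat.pos_of_ne_zero h⟩)
          exact Nat.le_zero.1 (h0 ▸ colorsAt_delAt_le G c P v)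
      have : ∑ v, (colorsAt (delAt G P) c v : ℝ) = 0 := by simp [hz]
      rw [this]
      positivity
  have hmono' : ¬ hasMonoClique (delAt G S) c s :=
    fun h => hmono (hasMonoClique_of_delAt G S c s h)
  have hRT : (delAt G S).edgeFinset.card ≤ RTmean m s ρ := by
    apply le_csSup
    · refine ⟨Fintype.card (Sym2 (Fin m)), fun e he => ?_⟩
      obtain ⟨G', c', _, _, he⟩ := he
      exact he ▸ Finset.card_le_univ _
    · exact ⟨delAt G S, c, hsum', hmono', rfl⟩
  have hE : G.edgeFinset.card ≤ (delAt G S).edgeFinset.card + S.card * m := by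
    refine le_trans (edge_card_delAt G S) (Nat.add_le_add_left ?_ _)
    calc ∑ v ∈ S, G.degree v ≤ ∑ v ∈ S, m :=
          Finset.sum_le_sum fun v _ => by simpa using Finset.card_le_univ (G.neighborFinset v)
      _ = S.card * m := by rw [Finset.sum_const, smul_eq_mul]
  have hER : (G.edgeFinset.card : ℝ) ≤ (RTmean m s ρ : ℝ) + (S.card : ℝ) * m := by
    have := le_trans hE (Nat.add_le_add_right hRT _)
    exact_mod_cast this
  have hkR : (k : ℝ) < α * m + 1 := Nat.ceil_lt_add_one (by positivity)
  have hSR : (S.card : ℝ) ≤ k := by exact_mod_cast hSk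
  have hslt : (S.card : ℝ) * m < ε * m ^ 2 / 4 := by nlinarith
  linarith
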